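/- Suppose a, b > 0 are such that h_{a,b} has exactly two zeros 0 < R₀(a,b) < R₁(a,b) in (0,∞) and h_{a,b}(t) > 0 if and only if t ∈ (R₀(a,b), R₁(a,b)). Then R₀(a,b) < R₁(a,b) < (S^{2*/2}/(2ν))^{1/(2*−2)}. Moreover, R₀(a,b) → 0 and R₁(a,b) → (S^{2*/2}/(2ν))^{1/(2*−2)} as (a,b) → (0,0); precisely, for every ε > 0 there exists δ > 0 such that for all a, b ∈ (0, δ), h_{a,b} has exactly two zeros R₀(a,b) < R₁(a,b) with h_{a,b} > 0 exactly between them, R₀(a,b) < ε, and |R₁(a,b) − (S^{2*/2}/(2ν))^{1/(2*−2)}| < ε. -/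

import Mathlib

open Real

/-- `γ_s = N(s-2)/2`. -/
noncomputable def gam (N : ℕ) (s : ℝ) : ℝ := (N : ℝ) * (s - 2) / 2

/-- The critical Sobolev exponent `2* = 2N/(N-2)`. -/
noncomputable def twoStar (N : ℕ) : ℝ := 2 * (N : ℝ) / ((N : ℝ) - 2)

/-- The function `h_{a,b}`. -/
noncomputable def hab (N : ℕ) (p q Cp Cq S μ₁ μ₂ ν a b t : ℝ) : ℝ :=
  (1 / 2) * t ^ 2
    - (μ₁ / p * Cp * a ^ ((p - gam N p) / 2)) * t ^ (gam N p)
    - (μ₂ / q * Cq * b ^ ((q - gam N q) / 2)) * t ^ (gam N q)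
    - ν * S ^ (-(twoStar N / 2)) * t ^ (twoStar N)

/-- `h` has exactly two zeros `0 < R₀ < R₁` in `(0,∞)`,
and `h t > 0` iff `t ∈ (R₀, R₁)`. -/
def TwoZeros (h : ℝ → ℝ) (R₀ R₁ : ℝ) : Prop :=
  0 < R₀ ∧ R₀ < R₁ ∧
    (∀ t : ℝ, 0 < t → (h t = 0 ↔ t = R₀ ∨ t = R₁)) ∧
    (∀ t : ℝ, 0 < t → (0 < h t ↔ R₀ < t ∧ t < R₁))


open Real Set

namespace AuxG

/-- The reduced function `g(t) = 1/2 - A t^α - B t^β - C t^γ`. -/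
noncomputable def g (A B C α β γ t : ℝ) : ℝ :=
  1/2 - A * t ^ α - B * t ^ β - C * t ^ γ

lemma contOn (A B C α β γ : ℝ) : ContinuousOn (g A B C α β γ) (Ioi (0:ℝ)) := by
  intro t ht
  have h : ∀ e : ℝ, ContinuousAt (fun t : ℝ => t ^ e) t := fun e =>
    Real.continuousAt_rpow_const t e (Or.inl (ne_of_gt ht))
  exact (((continuousAt_const.sub (continuousAt_const.mul (h α))).sub
    (continuousAt_const.mul (h β))).sub (continuousAt_const.mul (h γ))).continuousWithinAt

lemma hasDeriv (A B C α β γ : ℝ) {t : ℝ} (ht : 0 < t) :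
    HasDerivAt (g A B C α β γ)
      (t ^ (α - 1) * (A * (-α) - B * β * t ^ (β - α) - C * γ * t ^ (γ - α))) t := by
  have h : ∀ e : ℝ, HasDerivAt (fun t : ℝ => t ^ e) (e * t ^ (e - 1)) t := fun e =>
    Real.hasDerivAt_rpow_const (Or.inl ht.ne')
  have H : HasDerivAt (g A B C α β γ)
      (0 - A * (α * t ^ (α - 1)) - B * (β * t ^ (β - 1)) - C * (γ * t ^ (γ - 1))) t :=
    (((hasDerivAt_const t ((1:ℝ)/2)).sub ((h α).const_mul A)).sub
      ((h β).const_mul B)).sub ((h γ).const_mul C)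
  convert H using 1
  rw [show β - 1 = (α - 1) + (β - α) by ring, show γ - 1 = (α - 1) + (γ - α) by ring,
    Real.rpow_add ht, Real.rpow_add ht]
  ring

lemma qc {A B C α β γ : ℝ} (hA : 0 < A) (hB : 0 < B) (hC : 0 < C)
    (hα : α < 0) (hβ : 0 < β) (hβγ : β < γ) :
    ∀ s t u : ℝ, 0 < s → s < t → t < u →
      min (g A B C α β γ s) (g A B C α β γ u) < g A B C α β γ t := by
  set G := g A B C α β γ with hG
  set ψ : ℝ → ℝ := fun t => A * (-α) - B * β * t ^ (β - α) - C * γ * t ^ (γ - α) with hψ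
  have hγ : 0 < γ := hβ.trans hβγ
  have hβα : 0 < β - α := by linarith
  have hγα : 0 < γ - α := by linarith
  have hP : 0 < A * (-α) := mul_pos hA (by linarith)
  have hK : 0 < B * β + C * γ := by positivity
  set P := A * (-α)
  set K := B * β + C * γ
  -- ψ is strictly antitone on (0, ∞)
  have hanti : ∀ x y : ℝ, 0 < x → x < y → ψ y < ψ x := by
    intro x y hx hxy
    have h1 : x ^ (β - α) < y ^ (β - α) := Real.rpow_lt_rpow hx.le hxy hβα
    have h2 : x ^ (γ - α) < y ^ (γ - α) := Real.rpow_lt_rpow hx.le hxy hγα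
    have h3 := mul_lt_mul_of_pos_left h1 (mul_pos hB hβ)
    have h4 := mul_lt_mul_of_pos_left h2 (mul_pos hC hγ)
    simp only [hψ]
    linarith
  have hψcont : ContinuousOn ψ (Ioi (0:ℝ)) := by
    intro t ht
    have h : ∀ e : ℝ, ContinuousAt (fun t : ℝ => t ^ e) t := fun e =>
      Real.continuousAt_rpow_const t e (Or.inl (ne_of_gt ht))
    exact ((continuousAt_const.sub (continuousAt_const.mul (h (β - α)))).sub
      (continuousAt_const.mul (h (γ - α)))).continuousWithinAt
  -- a small point where ψ is positive
  obtain ⟨tL, htL0, hψL⟩ : ∃ tL : ℝ, 0 < tL ∧ 0 < ψ tL := by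
    refine ⟨min 1 ((P / (2 * K)) ^ (β - α)⁻¹), lt_min one_pos (Real.rpow_pos_of_pos (by positivity) _), ?_⟩
    set tL := min 1 ((P / (2 * K)) ^ (β - α)⁻¹) with htLdef
    have htL0 : 0 < tL := lt_min one_pos (Real.rpow_pos_of_pos (by positivity) _)
    have htL1 : tL ≤ 1 := min_le_left _ _
    have hpow : tL ^ (β - α) ≤ P / (2 * K) := by
      have h1 : tL ≤ (P / (2 * K)) ^ (β - α)⁻¹ := min_le_right _ _
      have h2 := Real.rpow_le_rpow htL0.le h1 hβα.le
      rwa [← Real.rpow_mul (by positivity), inv_mul_cancel₀ hβα.ne', Real.rpow_one] at h2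
    have hmono : tL ^ (γ - α) ≤ tL ^ (β - α) :=
      Real.rpow_le_rpow_of_exponent_ge htL0 htL1 (by linarith)
    have h3 : C * γ * tL ^ (γ - α) ≤ C * γ * tL ^ (β - α) :=
      mul_le_mul_of_nonneg_left hmono (by positivity)
    have h4 : K * tL ^ (β - α) ≤ K * (P / (2 * K)) :=
      mul_le_mul_of_nonneg_left hpow hK.le
    have h5 : K * (P / (2 * K)) = P / 2 := by field_simp
    simp only [hψ]
    nlinarith [Real.rpow_pos_of_pos htL0 (β - α)]
  -- a large point where ψ is negative
  obtain ⟨u₀, hu₀L, hψu⟩ : ∃ u₀ : ℝ, tL < u₀ ∧ ψ u₀ < 0 := by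
    have hbase : (0:ℝ) ≤ (2 * P / (C * γ)) ^ (γ - α)⁻¹ :=
      (Real.rpow_pos_of_pos (by positivity) _).le
    set u₀ := max 1 ((2 * P / (C * γ)) ^ (γ - α)⁻¹) with hu₀def
    have hu₀0 : 0 < u₀ := lt_of_lt_of_le one_pos (le_max_left _ _)
    have hpow : 2 * P / (C * γ) ≤ u₀ ^ (γ - α) := by
      have h1 := Real.rpow_le_rpow hbase (le_max_right 1 _) hγα.le
      rwa [← Real.rpow_mul (by positivity), inv_mul_cancel₀ hγα.ne', Real.rpow_one] at h1
    have h2 : C * γ * (2 * P / (C * γ)) ≤ C * γ * u₀ ^ (γ - α) :=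
      mul_le_mul_of_nonneg_left hpow (by positivity)
    have h3 : C * γ * (2 * P / (C * γ)) = 2 * P := by field_simp
    have hψu : ψ u₀ < 0 := by
      simp only [hψ]
      nlinarith [Real.rpow_pos_of_pos hu₀0 (β - α), mul_pos (mul_pos hB hβ) (Real.rpow_pos_of_pos hu₀0 (β - α))]
    refine ⟨u₀, ?_, hψu⟩
    by_contra hcon
    push_neg at hcon
    rcases eq_or_lt_of_le hcon with h | h
    · rw [h] at hψu; linarith
    · have := hanti u₀ tL hu₀0 h; linarith
  -- the peak point
  obtain ⟨tstar, hts_mem, hts⟩ : ∃ x ∈ Icc tL u₀, ψ x = 0 := by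
    have hc : ContinuousOn ψ (Icc tL u₀) :=
      hψcont.mono (fun x hx => lt_of_lt_of_le htL0 hx.1)
    have := intermediate_value_Icc' hu₀L.le hc (a := tL) (b := u₀)
    have h0 : (0:ℝ) ∈ Icc (ψ u₀) (ψ tL) := ⟨hψu.le, hψL.le⟩
    obtain ⟨x, hx, hx0⟩ := this h0
    exact ⟨x, hx, hx0⟩
  have hts0 : 0 < tstar := lt_of_lt_of_le htL0 hts_mem.1
  -- g is strictly monotone on (0, tstar]
  have hmono : StrictMonoOn G (Ioc 0 tstar) := by
    apply strictMonoOn_of_deriv_pos (convex_Ioc 0 tstar)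
    · exact (contOn A B C α β γ).mono (fun x hx => hx.1)
    · intro x hx
      rw [interior_Ioc] at hx
      rw [(hasDeriv A B C α β γ hx.1).deriv]
      have h1 : 0 < x ^ (α - 1) := Real.rpow_pos_of_pos hx.1 _
      have h2 : 0 < ψ x := by
        have := hanti x tstar hx.1 hx.2
        rw [hts] at this; exact this
      exact mul_pos h1 h2
  -- g is strictly antitone on [tstar, ∞)
  have hantiG : StrictAntiOn G (Ici tstar) := by
    apply strictAntiOn_of_deriv_neg (convex_Ici tstar)
    · exact (contOn A B C α β γ).mono (fun x hx => lt_of_lt_of_le hts0 hx)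
    · intro x hx
      rw [interior_Ici] at hx
      rw [(hasDeriv A B C α β γ (hts0.trans hx)).deriv]
      have h1 : 0 < x ^ (α - 1) := Real.rpow_pos_of_pos (hts0.trans hx) _
      have h2 : ψ x < 0 := by
        have := hanti tstar x hts0 hx
        rw [hts] at this; exact this
      exact mul_neg_of_pos_of_neg h1 h2
  -- conclude quasiconcavity
  intro s t u hs hst htu
  rcases le_or_gt t tstar with h | h
  · have := hmono (Set.mem_Ioc.mpr ⟨hs, by linarith⟩) (Set.mem_Ioc.mpr ⟨by linarith, h⟩) hst
    exact lt_of_le_of_lt (min_le_left _ _) this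
  · have := hantiG (Set.mem_Ici.mpr h.le) (Set.mem_Ici.mpr (by linarith)) htu
    exact lt_of_le_of_lt (min_le_right _ _) this

/-- From quasiconcavity and two zeros, we get the exact sign description. -/
lemma exact {G : ℝ → ℝ}
    (hqc : ∀ s t u : ℝ, 0 < s → s < t → t < u → min (G s) (G u) < G t)
    {R₀ R₁ : ℝ} (hR₀ : 0 < R₀) (hR : R₀ < R₁) (h₀ : G R₀ = 0) (h₁ : G R₁ = 0) :
    (∀ t : ℝ, 0 < t → (G t = 0 ↔ t = R₀ ∨ t = R₁)) ∧
    (∀ t : ℝ, 0 < t → (0 < G t ↔ R₀ < t ∧ t < R₁)) := by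
  have neg_lo : ∀ t : ℝ, 0 < t → t < R₀ → G t < 0 := by
    intro t ht h
    have := hqc t R₀ R₁ ht h hR
    rw [h₀, h₁] at this
    rcases min_lt_iff.mp this with h' | h' <;> linarith
  have neg_hi : ∀ t : ℝ, R₁ < t → G t < 0 := by
    intro t h
    have := hqc R₀ R₁ t hR₀ hR h
    rw [h₀, h₁] at this
    rcases min_lt_iff.mp this with h' | h' <;> linarith
  have pos_mid : ∀ t : ℝ, R₀ < t → t < R₁ → 0 < G t := by
    intro t h h'
    have := hqc R₀ t R₁ hR₀ h h'
    rw [h₀, h₁] at this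
    simpa using this
  constructor
  · intro t ht
    constructor
    · intro hzero
      rcases lt_trichotomy t R₀ with h | h | h
      · exact absurd hzero (ne_of_lt (neg_lo t ht h))
      · exact Or.inl h
      · rcases lt_trichotomy t R₁ with h' | h' | h'
        · exact absurd hzero (ne_of_gt (pos_mid t h h'))
        · exact Or.inr h'
        · exact absurd hzero (ne_of_lt (neg_hi t h'))
    · rintro (rfl | rfl) <;> assumption
  · intro t ht
    constructor
    · intro hpos
      rcases lt_trichotomy t R₀ with h | h | h
      · exact absurd hpos (not_lt.mpr (neg_lo t ht h).le)
      · rw [h, h₀] at hpos; exact absurd hpos (lt_irrefl 0)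
      · refine ⟨h, ?_⟩
        rcases lt_trichotomy t R₁ with h' | h' | h'
        · exact h'
        · rw [h', h₁] at hpos; exact absurd hpos (lt_irrefl 0)
        · exact absurd hpos (not_lt.mpr (neg_hi t h').le)
    · rintro ⟨h, h'⟩
      exact pos_mid t h h'

end AuxG


set_option maxHeartbeats 1000000 in
theorem stmt_1 (N : ℕ) (hN : 3 ≤ N) (p q Cp Cq S μ₁ μ₂ ν : ℝ)
    (hp : 2 < p) (hpN : p < 2 + 4 / (N : ℝ)) (hNq : 2 + 4 / (N : ℝ) < q)
    (hq : q < twoStar N) (hCp : 0 < Cp) (hCq : 0 < Cq) (hS : 0 < S)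
    (hμ₁ : 0 < μ₁) (hμ₂ : 0 < μ₂) (hν : 0 < ν) :
    -- the upper bound R₀ < R₁ < (S^{2*/2}/(2ν))^{1/(2*-2)} for all a, b > 0
    (∀ a b R₀ R₁ : ℝ, 0 < a → 0 < b →
      TwoZeros (hab N p q Cp Cq S μ₁ μ₂ ν a b) R₀ R₁ →
      R₀ < R₁ ∧ R₁ < (S ^ (twoStar N / 2) / (2 * ν)) ^ (1 / (twoStar N - 2))) ∧
    -- the limiting behaviour as (a,b) → (0,0)
    (∀ ε : ℝ, 0 < ε → ∃ δ : ℝ, 0 < δ ∧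
      ∀ a b : ℝ, 0 < a → a < δ → 0 < b → b < δ →
        ∃ R₀ R₁ : ℝ, TwoZeros (hab N p q Cp Cq S μ₁ μ₂ ν a b) R₀ R₁ ∧
          R₀ < ε ∧
          |R₁ - (S ^ (twoStar N / 2) / (2 * ν)) ^ (1 / (twoStar N - 2))| < ε) := by
  have hN3 : (3:ℝ) ≤ (N:ℝ) := by exact_mod_cast hN
  have hN0 : (0:ℝ) < (N:ℝ) := by linarith
  have hN2 : (0:ℝ) < (N:ℝ) - 2 := by linarith
  have hts2 : 2 < twoStar N := by rw [twoStar, lt_div_iff₀ hN2]; linarith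
  have h4N : (N:ℝ) * (4 / N) = 4 := by field_simp
  have hγp2 : gam N p < 2 := by
    have h := mul_lt_mul_of_pos_left (show p - 2 < 4 / (N:ℝ) by linarith) hN0
    rw [h4N] at h
    rw [gam]; linarith
  have hγp0 : 0 < gam N p := by
    rw [gam]; exact div_pos (mul_pos hN0 (by linarith)) two_pos
  have hγq2 : 2 < gam N q := by
    have h := mul_lt_mul_of_pos_left (show 4 / (N:ℝ) < q - 2 by linarith) hN0
    rw [h4N] at h
    rw [gam]; linarith
  have hpts : p < twoStar N := by
    have : 2 + 4 / (N:ℝ) < twoStar N := hNq.trans hq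
    linarith
  have hγqts : gam N q < twoStar N := by
    have h5 : (N:ℝ) * (4 / ((N:ℝ) - 2)) / 2 = twoStar N := by
      rw [twoStar]; field_simp; try ring
    have he : twoStar N - 2 = 4 / ((N:ℝ) - 2) := by
      rw [twoStar]; field_simp [hN2.ne']; try ring
    have h6 : (N:ℝ) * (q - 2) < (N:ℝ) * (4 / ((N:ℝ) - 2)) :=
      mul_lt_mul_of_pos_left (by linarith) hN0
    rw [gam]; linarith
  have hΓ : 0 < twoStar N - 2 := by linarith
  have hep : 0 < (p - gam N p) / 2 := by
    have h7 : twoStar N * ((N:ℝ) - 2) = 2 * (N:ℝ) := by rw [twoStar]; field_simp; try ring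
    have h8 : p * ((N:ℝ) - 2) < 2 * (N:ℝ) := by
      calc p * ((N:ℝ) - 2) < twoStar N * ((N:ℝ) - 2) := mul_lt_mul_of_pos_right hpts hN2
        _ = 2 * (N:ℝ) := h7
    rw [gam]; nlinarith
  have heq : 0 < (q - gam N q) / 2 := by
    have h7 : twoStar N * ((N:ℝ) - 2) = 2 * (N:ℝ) := by rw [twoStar]; field_simp; try ring
    have h8 : q * ((N:ℝ) - 2) < 2 * (N:ℝ) := by
      calc q * ((N:ℝ) - 2) < twoStar N * ((N:ℝ) - 2) := mul_lt_mul_of_pos_right hq hN2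
        _ = 2 * (N:ℝ) := h7
    rw [gam]; nlinarith
  obtain ⟨T, hTdef⟩ : ∃ x : ℝ, x = (S ^ (twoStar N / 2) / (2 * ν)) ^ (1 / (twoStar N - 2)) := ⟨_, rfl⟩
  rw [← hTdef]
  have hbase : 0 < S ^ (twoStar N / 2) / (2 * ν) := by positivity
  have hTpos : 0 < T := by rw [hTdef]; exact Real.rpow_pos_of_pos hbase _
  obtain ⟨c, hcdef⟩ : ∃ x : ℝ, x = ν * S ^ (-(twoStar N / 2)) := ⟨_, rfl⟩
  have hcpos : 0 < c := by rw [hcdef]; positivity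
  have hcT : c * T ^ (twoStar N - 2) = 1 / 2 := by
    have h1 : T ^ (twoStar N - 2) = S ^ (twoStar N / 2) / (2 * ν) := by
      rw [hTdef, ← Real.rpow_mul hbase.le, one_div, inv_mul_cancel₀ hΓ.ne', Real.rpow_one]
    have hSS : S ^ (-(twoStar N / 2)) * S ^ (twoStar N / 2) = 1 := by
      rw [← Real.rpow_add hS, neg_add_cancel, Real.rpow_zero]
    rw [h1, hcdef]
    calc ν * S ^ (-(twoStar N / 2)) * (S ^ (twoStar N / 2) / (2 * ν))
        = S ^ (-(twoStar N / 2)) * S ^ (twoStar N / 2) * (ν / (2 * ν)) := by ring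
      _ = 1 * (ν / (2 * ν)) := by rw [hSS]
      _ = 1 / 2 := by rw [one_mul]; field_simp; try ring
  obtain ⟨K₁, hK₁def⟩ : ∃ x : ℝ, x = μ₁ / p * Cp := ⟨_, rfl⟩
  obtain ⟨K₂, hK₂def⟩ : ∃ x : ℝ, x = μ₂ / q * Cq := ⟨_, rfl⟩
  have hK₁pos : 0 < K₁ := by rw [hK₁def]; exact mul_pos (div_pos hμ₁ (by linarith)) hCp
  have hK₂pos : 0 < K₂ := by rw [hK₂def]; exact mul_pos (div_pos hμ₂ (by linarith)) hCq
  have hab_eq : ∀ a b t : ℝ, 0 < t → hab N p q Cp Cq S μ₁ μ₂ ν a b t =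
      t ^ 2 * AuxG.g (K₁ * a ^ ((p - gam N p) / 2)) (K₂ * b ^ ((q - gam N q) / 2)) c
        (gam N p - 2) (gam N q - 2) (twoStar N - 2) t := by
    intro a b t ht
    have k : ∀ e : ℝ, t ^ e = t ^ 2 * t ^ (e - 2) := by
      intro e
      rw [← Real.rpow_natCast t 2, ← Real.rpow_add ht]
      congr 1
      push_cast
      ring
    simp only [hab, AuxG.g, hK₁def, hK₂def, hcdef]
    rw [k (gam N p), k (gam N q), k (twoStar N)]
    ring
  have hαneg : gam N p - 2 < 0 := by linarith
  have hβpos : (0:ℝ) < gam N q - 2 := by linarith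
  have hβΓ : gam N q - 2 < twoStar N - 2 := by linarith
  -- negativity beyond T
  have hneg : ∀ a b t : ℝ, 0 < a → 0 < b → T ≤ t →
      hab N p q Cp Cq S μ₁ μ₂ ν a b t < 0 := by
    intro a b t ha hb hTt
    have ht : 0 < t := lt_of_lt_of_le hTpos hTt
    rw [hab_eq a b t ht]
    have h2 : 0 < K₁ * a ^ ((p - gam N p) / 2) * t ^ (gam N p - 2) :=
      mul_pos (mul_pos hK₁pos (Real.rpow_pos_of_pos ha _)) (Real.rpow_pos_of_pos ht _)
    have h3 : 0 < K₂ * b ^ ((q - gam N q) / 2) * t ^ (gam N q - 2) :=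
      mul_pos (mul_pos hK₂pos (Real.rpow_pos_of_pos hb _)) (Real.rpow_pos_of_pos ht _)
    have h1 : c * T ^ (twoStar N - 2) ≤ c * t ^ (twoStar N - 2) :=
      mul_le_mul_of_nonneg_left (Real.rpow_le_rpow hTpos.le hTt hΓ.le) hcpos.le
    rw [hcT] at h1
    have hg : AuxG.g (K₁ * a ^ ((p - gam N p) / 2)) (K₂ * b ^ ((q - gam N q) / 2)) c
        (gam N p - 2) (gam N q - 2) (twoStar N - 2) t < 0 := by
      simp only [AuxG.g]; linarith
    have ht2 : (0:ℝ) < t ^ 2 := by positivity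
    exact mul_neg_of_pos_of_neg ht2 hg
  constructor
  · -- Part 1
    intro a b R₀ R₁ ha hb htz
    obtain ⟨hR₀pos, hR01, hzero, _⟩ := htz
    refine ⟨hR01, ?_⟩
    by_contra hcon
    push_neg at hcon
    have h1 := hneg a b R₁ ha hb hcon
    have h2 := (hzero R₁ (hR₀pos.trans hR01)).mpr (Or.inr rfl)
    linarith
  · -- Part 2
    intro ε hε
    obtain ⟨t₀, ht₀def⟩ : ∃ x : ℝ, x = min ε T / 2 := ⟨_, rfl⟩
    have ht₀pos : 0 < t₀ := by rw [ht₀def]; exact div_pos (lt_min hε hTpos) two_pos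
    have ht₀T2 : t₀ ≤ T / 2 := by
      have := min_le_right ε T; rw [ht₀def]; linarith
    have ht₀ε : t₀ ≤ ε / 2 := by
      have := min_le_left ε T; rw [ht₀def]; linarith
    have ht₀T : t₀ < T := by linarith
    obtain ⟨t₁, ht₁def⟩ : ∃ x : ℝ, x = T - t₀ := ⟨_, rfl⟩
    have ht₁pos : 0 < t₁ := by rw [ht₁def]; linarith
    have ht₀t₁ : t₀ ≤ t₁ := by rw [ht₁def]; linarith
    have ht₁T : t₁ < T := by rw [ht₁def]; linarith
    have hm₀ : 0 < 1 / 2 - c * t₀ ^ (twoStar N - 2) := by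
      have h1 := Real.rpow_lt_rpow ht₀pos.le ht₀T hΓ
      have h2 := mul_lt_mul_of_pos_left h1 hcpos
      linarith [hcT]
    have hm₁ : 0 < 1 / 2 - c * t₁ ^ (twoStar N - 2) := by
      have h1 := Real.rpow_lt_rpow ht₁pos.le ht₁T hΓ
      have h2 := mul_lt_mul_of_pos_left h1 hcpos
      linarith [hcT]
    obtain ⟨m, hmdef⟩ : ∃ x : ℝ, x = min (1 / 2 - c * t₀ ^ (twoStar N - 2)) (1 / 2 - c * t₁ ^ (twoStar N - 2)) := ⟨_, rfl⟩
    have hmpos : 0 < m := by rw [hmdef]; exact lt_min hm₀ hm₁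
    have ht₀α : 0 < t₀ ^ (gam N p - 2) := Real.rpow_pos_of_pos ht₀pos _
    have ht₁β : 0 < t₁ ^ (gam N q - 2) := Real.rpow_pos_of_pos ht₁pos _
    obtain ⟨εA, hεAdef⟩ : ∃ x : ℝ, x = m / (2 * t₀ ^ (gam N p - 2)) := ⟨_, rfl⟩
    obtain ⟨εB, hεBdef⟩ : ∃ x : ℝ, x = m / (2 * t₁ ^ (gam N q - 2)) := ⟨_, rfl⟩
    have hεApos : 0 < εA := by rw [hεAdef]; exact div_pos hmpos (by positivity)
    have hεBpos : 0 < εB := by rw [hεBdef]; exact div_pos hmpos (by positivity)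
    obtain ⟨δ₁, hδ₁def⟩ : ∃ x : ℝ, x = (εA / K₁) ^ (((p - gam N p) / 2)⁻¹) := ⟨_, rfl⟩
    obtain ⟨δ₂, hδ₂def⟩ : ∃ x : ℝ, x = (εB / K₂) ^ (((q - gam N q) / 2)⁻¹) := ⟨_, rfl⟩
    have hδ₁pos : 0 < δ₁ := by rw [hδ₁def]; exact Real.rpow_pos_of_pos (div_pos hεApos hK₁pos) _
    have hδ₂pos : 0 < δ₂ := by rw [hδ₂def]; exact Real.rpow_pos_of_pos (div_pos hεBpos hK₂pos) _
    refine ⟨min δ₁ δ₂, lt_min hδ₁pos hδ₂pos, ?_⟩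
    intro a b ha haδ hb hbδ
    obtain ⟨A, hAdef⟩ : ∃ x : ℝ, x = K₁ * a ^ ((p - gam N p) / 2) := ⟨_, rfl⟩
    obtain ⟨B, hBdef⟩ : ∃ x : ℝ, x = K₂ * b ^ ((q - gam N q) / 2) := ⟨_, rfl⟩
    have hApos : 0 < A := by rw [hAdef]; exact mul_pos hK₁pos (Real.rpow_pos_of_pos ha _)
    have hBpos : 0 < B := by rw [hBdef]; exact mul_pos hK₂pos (Real.rpow_pos_of_pos hb _)
    have hAlt : A < εA := by
      have h1 : a < δ₁ := lt_of_lt_of_le haδ (min_le_left _ _)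
      have h2 : a ^ ((p - gam N p) / 2) < δ₁ ^ ((p - gam N p) / 2) :=
        Real.rpow_lt_rpow ha.le h1 hep
      have h3 : δ₁ ^ ((p - gam N p) / 2) = εA / K₁ := by
        rw [hδ₁def, ← Real.rpow_mul (div_pos hεApos hK₁pos).le,
          inv_mul_cancel₀ hep.ne', Real.rpow_one]
      rw [h3] at h2
      have h4 := mul_lt_mul_of_pos_left h2 hK₁pos
      have h5 : K₁ * (εA / K₁) = εA := by field_simp
      rw [hAdef]; linarith
    have hBlt : B < εB := by
      have h1 : b < δ₂ := lt_of_lt_of_le hbδ (min_le_right _ _)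
      have h2 : b ^ ((q - gam N q) / 2) < δ₂ ^ ((q - gam N q) / 2) :=
        Real.rpow_lt_rpow hb.le h1 heq
      have h3 : δ₂ ^ ((q - gam N q) / 2) = εB / K₂ := by
        rw [hδ₂def, ← Real.rpow_mul (div_pos hεBpos hK₂pos).le,
          inv_mul_cancel₀ heq.ne', Real.rpow_one]
      rw [h3] at h2
      have h4 := mul_lt_mul_of_pos_left h2 hK₂pos
      have h5 : K₂ * (εB / K₂) = εB := by field_simp
      rw [hBdef]; linarith
    have hAt₀ : A * t₀ ^ (gam N p - 2) < m / 2 := by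
      have h1 := mul_lt_mul_of_pos_right hAlt ht₀α
      have h2 : εA * t₀ ^ (gam N p - 2) = m / 2 := by
        rw [hεAdef]; field_simp
      linarith
    have hBt₁ : B * t₁ ^ (gam N q - 2) < m / 2 := by
      have h1 := mul_lt_mul_of_pos_right hBlt ht₁β
      have h2 : εB * t₁ ^ (gam N q - 2) = m / 2 := by
        rw [hεBdef]; field_simp
      linarith
    have hAt₁le : A * t₁ ^ (gam N p - 2) ≤ A * t₀ ^ (gam N p - 2) :=
      mul_le_mul_of_nonneg_left
        (Real.rpow_le_rpow_of_nonpos ht₀pos ht₀t₁ hαneg.le) hApos.le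
    have hBt₀le : B * t₀ ^ (gam N q - 2) ≤ B * t₁ ^ (gam N q - 2) :=
      mul_le_mul_of_nonneg_left (Real.rpow_le_rpow ht₀pos.le ht₀t₁ hβpos.le) hBpos.le
    have hgt₀ : 0 < AuxG.g A B c (gam N p - 2) (gam N q - 2) (twoStar N - 2) t₀ := by
      have hmle : m ≤ 1 / 2 - c * t₀ ^ (twoStar N - 2) := by rw [hmdef]; exact min_le_left _ _
      simp only [AuxG.g]; linarith
    have hgt₁ : 0 < AuxG.g A B c (gam N p - 2) (gam N q - 2) (twoStar N - 2) t₁ := by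
      have hmle : m ≤ 1 / 2 - c * t₁ ^ (twoStar N - 2) := by rw [hmdef]; exact min_le_right _ _
      simp only [AuxG.g]; linarith
    -- a small point where g is negative
    obtain ⟨s₀, hs₀def⟩ : ∃ x : ℝ, x = min (t₀ / 2) (A⁻¹ ^ ((gam N p - 2)⁻¹)) := ⟨_, rfl⟩
    have hs₀pos : 0 < s₀ := by
      rw [hs₀def]
      exact lt_min (by linarith) (Real.rpow_pos_of_pos (inv_pos.mpr hApos) _)
    have hs₀t₀ : s₀ < t₀ := by
      rw [hs₀def]
      exact lt_of_le_of_lt (min_le_left _ _) (by linarith)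
    have hs₀pow : A⁻¹ ≤ s₀ ^ (gam N p - 2) := by
      have h1 : s₀ ≤ A⁻¹ ^ ((gam N p - 2)⁻¹) := by rw [hs₀def]; exact min_le_right _ _
      have h2 := Real.rpow_le_rpow_of_nonpos hs₀pos h1 hαneg.le
      rwa [← Real.rpow_mul (inv_pos.mpr hApos).le, inv_mul_cancel₀ hαneg.ne,
        Real.rpow_one] at h2
    have hgs₀ : AuxG.g A B c (gam N p - 2) (gam N q - 2) (twoStar N - 2) s₀ < 0 := by
      have h1 : 1 ≤ A * s₀ ^ (gam N p - 2) := by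
        have h := mul_le_mul_of_nonneg_left hs₀pow hApos.le
        rwa [mul_inv_cancel₀ hApos.ne'] at h
      have h2 : 0 < B * s₀ ^ (gam N q - 2) :=
        mul_pos hBpos (Real.rpow_pos_of_pos hs₀pos _)
      have h3 : 0 < c * s₀ ^ (twoStar N - 2) :=
        mul_pos hcpos (Real.rpow_pos_of_pos hs₀pos _)
      simp only [AuxG.g]; linarith
    have hgT : AuxG.g A B c (gam N p - 2) (gam N q - 2) (twoStar N - 2) T < 0 := by
      have h := hneg a b T ha hb le_rfl
      rw [hab_eq a b T hTpos, ← hAdef, ← hBdef] at h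
      by_contra h'
      push_neg at h'
      have hT2 : (0:ℝ) ≤ T ^ 2 := by positivity
      exact absurd h (not_lt.mpr (mul_nonneg hT2 h'))
    -- IVT on both sides
    have hcont₀ : ContinuousOn (AuxG.g A B c (gam N p - 2) (gam N q - 2) (twoStar N - 2))
        (Set.Icc s₀ t₀) :=
      (AuxG.contOn A B c _ _ _).mono (fun x hx => lt_of_lt_of_le hs₀pos hx.1)
    have hcont₁ : ContinuousOn (AuxG.g A B c (gam N p - 2) (gam N q - 2) (twoStar N - 2))
        (Set.Icc t₁ T) :=
      (AuxG.contOn A B c _ _ _).mono (fun x hx => lt_of_lt_of_le ht₁pos hx.1)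
    obtain ⟨R₀, hR₀mem, hR₀zero⟩ :
        ∃ x ∈ Set.Ioo s₀ t₀,
          AuxG.g A B c (gam N p - 2) (gam N q - 2) (twoStar N - 2) x = 0 := by
      have h := intermediate_value_Ioo hs₀t₀.le hcont₀
      obtain ⟨x, hx, hx0⟩ := h (Set.mem_Ioo.mpr ⟨hgs₀, hgt₀⟩)
      exact ⟨x, hx, hx0⟩
    obtain ⟨R₁, hR₁mem, hR₁zero⟩ :
        ∃ x ∈ Set.Ioo t₁ T,
          AuxG.g A B c (gam N p - 2) (gam N q - 2) (twoStar N - 2) x = 0 := by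
      have h := intermediate_value_Ioo' ht₁T.le hcont₁
      obtain ⟨x, hx, hx0⟩ := h (Set.mem_Ioo.mpr ⟨hgT, hgt₁⟩)
      exact ⟨x, hx, hx0⟩
    have hqc := AuxG.qc hApos hBpos hcpos hαneg hβpos hβΓ
    have hR₀pos : 0 < R₀ := hs₀pos.trans hR₀mem.1
    have hR01 : R₀ < R₁ := by
      have h1 := hR₀mem.2
      have h2 := hR₁mem.1
      linarith
    obtain ⟨hz, hp'⟩ := AuxG.exact hqc hR₀pos hR01 hR₀zero hR₁zero
    refine ⟨R₀, R₁, ⟨hR₀pos, hR01, ?_, ?_⟩, ?_, ?_⟩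
    · intro t ht
      rw [hab_eq a b t ht, ← hAdef, ← hBdef, mul_eq_zero]
      have ht2 : (t:ℝ) ^ 2 ≠ 0 := pow_ne_zero 2 ht.ne'
      constructor
      · rintro (h | h)
        · exact absurd h ht2
        · exact (hz t ht).mp h
      · intro h
        exact Or.inr ((hz t ht).mpr h)
    · intro t ht
      rw [hab_eq a b t ht, ← hAdef, ← hBdef]
      have ht2 : (0:ℝ) < t ^ 2 := by positivity
      rw [mul_pos_iff_of_pos_left ht2]
      exact hp' t ht
    · have := hR₀mem.2
      linarith
    · rw [abs_lt]
      constructor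
      · have h1 := hR₁mem.1
        rw [ht₁def] at h1
        linarith
      · have h2 := hR₁mem.2
        linarith
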